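/- Let A = [[A₁₁, A₁₂],[0, A₂₂]] be a real block upper-triangular matrix with square diagonal blocks. If there exist symmetric positive definite matrices P₁, P₂ with A₁₁ᵀP₁ + P₁A₁₁ ≺ 0 and A₂₂ᵀP₂ + P₂A₂₂ ≺ 0, then there exists ε > 0 such that P = diag(P₁, ε·P₂) satisfies AᵀP + PA ≺ 0. -/

import Mathlib

open Matrix

private lemma posdef_lower_bound {n : ℕ} {Q : Matrix (Fin n) (Fin n) ℝ} (hQ : Q.PosDef) :
    ∃ c : ℝ, 0 < c ∧ ∀ x : Fin n → ℝ, c * (∑ i, x i ^ 2) ≤ x ⬝ᵥ Q *ᵥ x := by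
  rcases Nat.eq_zero_or_pos n with hn | hn
  · subst hn
    exact ⟨1, one_pos, fun x => by simp [dotProduct]⟩
  have : NeZero n := ⟨hn.ne'⟩
  set K : Set (Fin n → ℝ) := {x | ∑ i, x i ^ 2 = 1} with hK
  have hcont : Continuous fun x : Fin n → ℝ => x ⬝ᵥ Q *ᵥ x :=
    (continuous_id.dotProduct ((continuous_const (y := Q)).matrix_mulVec continuous_id))
  have hKc : IsCompact K := by
    rw [Metric.isCompact_iff_isClosed_bounded]
    constructor
    · exact isClosed_eq (by continuity) continuous_const
    · rw [Metric.isBounded_iff_subset_closedBall 0]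
      refine ⟨1, fun x hx => ?_⟩
      rw [Metric.mem_closedBall, dist_zero_right]
      rw [pi_norm_le_iff_of_nonneg zero_le_one]
      intro i
      have h1 : x i ^ 2 ≤ 1 := hx ▸ Finset.single_le_sum (fun j _ => sq_nonneg (x j)) (Finset.mem_univ i)
      rw [Real.norm_eq_abs]
      nlinarith [sq_abs (x i), abs_nonneg (x i)]
  have hKne : K.Nonempty := by
    refine ⟨fun i => if i = 0 then 1 else 0, ?_⟩
    simp [hK, ite_pow, Finset.sum_ite_eq']
  obtain ⟨x₀, hx₀K, hmin⟩ := hKc.exists_isMinOn hKne hcont.continuousOn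
  have hx₀ : x₀ ≠ 0 := by
    intro h
    rw [hK] at hx₀K
    simp [h] at hx₀K
  have hc : 0 < x₀ ⬝ᵥ Q *ᵥ x₀ := by
    have := hQ.dotProduct_mulVec_pos hx₀
    simpa using this
  refine ⟨x₀ ⬝ᵥ Q *ᵥ x₀, hc, fun x => ?_⟩
  rcases eq_or_ne x 0 with rfl | hx
  · simp
  have hX : 0 < ∑ i, x i ^ 2 := by
    obtain ⟨i, hi⟩ := Function.ne_iff.mp hx
    have hi2 : x i ≠ 0 := by simpa using hi
    exact Finset.sum_pos' (fun j _ => sq_nonneg (x j)) ⟨i, Finset.mem_univ i, by positivity⟩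
  set t : ℝ := Real.sqrt (∑ i, x i ^ 2) with ht
  have ht0 : 0 < t := Real.sqrt_pos.mpr hX
  set u : Fin n → ℝ := t⁻¹ • x with hu
  have huK : u ∈ K := by
    simp only [hK, Set.mem_setOf_eq, hu, Pi.smul_apply, smul_eq_mul, mul_pow]
    rw [← Finset.mul_sum]
    have : t ^ 2 = ∑ i, x i ^ 2 := Real.sq_sqrt hX.le
    field_simp [ht0.ne']
    linarith [this]
  have hxu : x = t • u := by
    rw [hu, smul_smul, mul_inv_cancel₀ ht0.ne', one_smul]
  have hq : x ⬝ᵥ Q *ᵥ x = t ^ 2 * (u ⬝ᵥ Q *ᵥ u) := by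
    rw [hxu, mulVec_smul, dotProduct_smul, smul_dotProduct]
    ring_nf
  have ht2 : ∑ i, x i ^ 2 = t ^ 2 := (Real.sq_sqrt hX.le).symm
  rw [hq, ht2]
  have := hmin huK
  have h2 : x₀ ⬝ᵥ Q *ᵥ x₀ ≤ u ⬝ᵥ Q *ᵥ u := this
  nlinarith [sq_nonneg t]
private lemma cross_bound {m k : ℕ} (B : Matrix (Fin m) (Fin k) ℝ) {δ : ℝ} (hδ : 0 < δ)
    (x : Fin m → ℝ) (y : Fin k → ℝ) :
    |x ⬝ᵥ B *ᵥ y| ≤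
      (∑ i, ∑ j, |B i j|) * ((δ * ∑ i, x i ^ 2 + δ⁻¹ * ∑ j, y j ^ 2) / 2) := by
  set X := ∑ i, x i ^ 2 with hX
  set Y := ∑ j, y j ^ 2 with hY
  have hXn : 0 ≤ X := Finset.sum_nonneg fun i _ => sq_nonneg _
  have hYn : 0 ≤ Y := Finset.sum_nonneg fun j _ => sq_nonneg _
  have key : ∀ (i : Fin m) (j : Fin k), |x i| * |y j| ≤ (δ * X + δ⁻¹ * Y) / 2 := by
    intro i j
    have h1 : x i ^ 2 ≤ X := hX ▸ Finset.single_le_sum (fun l _ => sq_nonneg (x l)) (Finset.mem_univ i)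
    have h2 : y j ^ 2 ≤ Y := hY ▸ Finset.single_le_sum (fun l _ => sq_nonneg (y l)) (Finset.mem_univ j)
    have hinv : δ * δ⁻¹ = 1 := mul_inv_cancel₀ hδ.ne'
    have hδi : 0 < δ⁻¹ := inv_pos.mpr hδ
    have h3 : 2 * δ * (|x i| * |y j|) ≤ δ ^ 2 * x i ^ 2 + y j ^ 2 := by
      nlinarith [sq_nonneg (δ * |x i| - |y j|), sq_abs (x i), sq_abs (y j)]
    have h4 := mul_le_mul_of_nonneg_left h3 hδi.le
    have h5 : δ⁻¹ * (2 * δ * (|x i| * |y j|)) = 2 * (|x i| * |y j|) := by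
      field_simp
    have h6 : δ⁻¹ * (δ ^ 2 * x i ^ 2 + y j ^ 2) = δ * x i ^ 2 + δ⁻¹ * y j ^ 2 := by
      field_simp
    rw [h5, h6] at h4
    nlinarith [mul_le_mul_of_nonneg_left h1 hδ.le, mul_le_mul_of_nonneg_left h2 hδi.le]
  calc |x ⬝ᵥ B *ᵥ y| = |∑ i, ∑ j, x i * (B i j * y j)| := by
        simp [dotProduct, mulVec, Finset.mul_sum]
    _ ≤ ∑ i, ∑ j, |x i * (B i j * y j)| :=
        (Finset.abs_sum_le_sum_abs _ _).trans
          (Finset.sum_le_sum fun i _ => Finset.abs_sum_le_sum_abs _ _)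
    _ ≤ ∑ i, ∑ j, |B i j| * ((δ * X + δ⁻¹ * Y) / 2) := by
        refine Finset.sum_le_sum fun i _ => Finset.sum_le_sum fun j _ => ?_
        rw [abs_mul, abs_mul]
        calc |x i| * (|B i j| * |y j|) = |B i j| * (|x i| * |y j|) := by ring
          _ ≤ |B i j| * ((δ * X + δ⁻¹ * Y) / 2) :=
            mul_le_mul_of_nonneg_left (key i j) (abs_nonneg _)
    _ = (∑ i, ∑ j, |B i j|) * ((δ * X + δ⁻¹ * Y) / 2) := by
        simp [← Finset.sum_mul]


theorem stmt_5 {n₁ n₂ : ℕ}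
    (A₁₁ : Matrix (Fin n₁) (Fin n₁) ℝ) (A₁₂ : Matrix (Fin n₁) (Fin n₂) ℝ)
    (A₂₂ : Matrix (Fin n₂) (Fin n₂) ℝ)
    (P₁ : Matrix (Fin n₁) (Fin n₁) ℝ) (P₂ : Matrix (Fin n₂) (Fin n₂) ℝ)
    (hP₁ : P₁.PosDef) (hP₂ : P₂.PosDef)
    (h₁ : (-(A₁₁ᵀ * P₁ + P₁ * A₁₁)).PosDef)
    (h₂ : (-(A₂₂ᵀ * P₂ + P₂ * A₂₂)).PosDef) :
    ∃ ε : ℝ, 0 < ε ∧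
      (-((Matrix.fromBlocks A₁₁ A₁₂ 0 A₂₂)ᵀ * Matrix.fromBlocks P₁ 0 0 (ε • P₂) +
         Matrix.fromBlocks P₁ 0 0 (ε • P₂) * Matrix.fromBlocks A₁₁ A₁₂ 0 A₂₂)).PosDef := by
  set Q₁ := -(A₁₁ᵀ * P₁ + P₁ * A₁₁) with hQ₁
  set Q₂ := -(A₂₂ᵀ * P₂ + P₂ * A₂₂) with hQ₂
  obtain ⟨c₁, hc₁, hb₁⟩ := posdef_lower_bound h₁
  obtain ⟨c₂, hc₂, hb₂⟩ := posdef_lower_bound h₂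
  set S : ℝ := ∑ i, ∑ j, |(P₁ * A₁₂) i j| with hSdef
  have hS : 0 ≤ S := Finset.sum_nonneg fun i _ => Finset.sum_nonneg fun j _ => abs_nonneg _
  set T : ℝ := S + 1 with hTdef
  have hT : 0 < T := by linarith
  set δ : ℝ := c₁ / (2 * T) with hδdef
  have hδ : 0 < δ := by positivity
  set ε : ℝ := (2 * T ^ 2 / c₁ + 1) / c₂ with hεdef
  have hε : 0 < ε := by positivity
  have hP₁sym : P₁ᵀ = P₁ := by
    have := hP₁.1
    rwa [IsHermitian, conjTranspose_eq_transpose_of_trivial] at this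
  have hM : -((Matrix.fromBlocks A₁₁ A₁₂ 0 A₂₂)ᵀ * Matrix.fromBlocks P₁ 0 0 (ε • P₂) +
         Matrix.fromBlocks P₁ 0 0 (ε • P₂) * Matrix.fromBlocks A₁₁ A₁₂ 0 A₂₂) =
      fromBlocks Q₁ (-(P₁ * A₁₂)) (-(A₁₂ᵀ * P₁)) (ε • Q₂) := by
    rw [hQ₁, hQ₂]
    simp [fromBlocks_transpose, fromBlocks_multiply, fromBlocks_add, Matrix.mul_smul,
      Matrix.smul_mul, smul_add, smul_neg, fromBlocks_neg]
  refine ⟨ε, hε, ?_⟩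
  rw [hM]
  rw [posDef_iff_dotProduct_mulVec]
  constructor
  · rw [isHermitian_fromBlocks_iff]
    refine ⟨h₁.1, ?_, ?_, ?_⟩
    · simp [conjTranspose_eq_transpose_of_trivial, transpose_mul, hP₁sym]
    · simp [conjTranspose_eq_transpose_of_trivial, transpose_mul, hP₁sym]
    · have := h₂.1
      rw [IsHermitian] at this ⊢
      rw [conjTranspose_smul, star_trivial, this]
  · intro v hv
    have hsv : star v = v := funext fun i => star_trivial _
    rw [hsv]
    set x : Fin n₁ → ℝ := v ∘ Sum.inl with hx
    set y : Fin n₂ → ℝ := v ∘ Sum.inr with hy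
    have hv' : v = Sum.elim x y := (Sum.elim_comp_inl_inr v).symm
    rw [hv', fromBlocks_mulVec, sumElim_dotProduct_sumElim]
    simp only [Sum.elim_comp_inl, Sum.elim_comp_inr]
    set X : ℝ := ∑ i, x i ^ 2 with hX
    set Y : ℝ := ∑ j, y j ^ 2 with hY
    have hXn : 0 ≤ X := Finset.sum_nonneg fun i _ => sq_nonneg _
    have hYn : 0 ≤ Y := Finset.sum_nonneg fun j _ => sq_nonneg _
    have hxy : 0 < X ∨ 0 < Y := by
      by_contra h
      push_neg at h
      have hX0 : X = 0 := le_antisymm h.1 hXn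
      have hY0 : Y = 0 := le_antisymm h.2 hYn
      apply hv
      rw [hv']
      have hx0 : x = 0 := by
        funext i
        have := (Finset.sum_eq_zero_iff_of_nonneg (fun j _ => sq_nonneg (x j))).mp hX0 i
          (Finset.mem_univ i)
        exact pow_eq_zero_iff (two_ne_zero) |>.mp this
      have hy0 : y = 0 := by
        funext j
        have := (Finset.sum_eq_zero_iff_of_nonneg (fun l _ => sq_nonneg (y l))).mp hY0 j
          (Finset.mem_univ j)
        exact pow_eq_zero_iff (two_ne_zero) |>.mp this
      rw [hx0, hy0]
      funext i
      cases i <;> simp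
    -- expand the quadratic form
    have hexp : x ⬝ᵥ (Q₁ *ᵥ x + (-(P₁ * A₁₂)) *ᵥ y)
          + y ⬝ᵥ ((-(A₁₂ᵀ * P₁)) *ᵥ x + (ε • Q₂) *ᵥ y)
        = x ⬝ᵥ Q₁ *ᵥ x - x ⬝ᵥ (P₁ * A₁₂) *ᵥ y - y ⬝ᵥ (A₁₂ᵀ * P₁) *ᵥ x
          + ε * (y ⬝ᵥ Q₂ *ᵥ y) := by
      simp [dotProduct_add, neg_mulVec, dotProduct_neg, smul_mulVec, dotProduct_smul,
        smul_eq_mul]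
      ring
    rw [hexp]
    -- bounds
    have hA1 : c₁ * X ≤ x ⬝ᵥ Q₁ *ᵥ x := hb₁ x
    have hA2 : c₂ * Y ≤ y ⬝ᵥ Q₂ *ᵥ y := hb₂ y
    set W : ℝ := (δ * X + δ⁻¹ * Y) / 2 with hW
    have hWn : 0 ≤ W := by
      have : 0 < δ⁻¹ := inv_pos.mpr hδ
      rw [hW]; positivity
    have hcr1 : x ⬝ᵥ (P₁ * A₁₂) *ᵥ y ≤ T * W :=
      (le_abs_self _).trans ((cross_bound (P₁ * A₁₂) hδ x y).trans
        (mul_le_mul_of_nonneg_right (by linarith) hWn))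
    have hS' : (∑ j, ∑ i, |(A₁₂ᵀ * P₁) j i|) = S := by
      rw [hSdef, Finset.sum_comm]
      congr 1
      funext j
      congr 1
      funext i
      congr 1
      have : A₁₂ᵀ * P₁ = (P₁ * A₁₂)ᵀ := by rw [transpose_mul, hP₁sym]
      rw [this, transpose_apply]
    have hcr2 : y ⬝ᵥ (A₁₂ᵀ * P₁) *ᵥ x ≤ T * W := by
      have hδi : 0 < δ⁻¹ := inv_pos.mpr hδ
      have h := cross_bound (A₁₂ᵀ * P₁) hδi y x
      rw [inv_inv, hS'] at h
      have h2 : (δ⁻¹ * Y + δ * X) / 2 = W := by rw [hW]; ring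
      rw [h2] at h
      exact (le_abs_self _).trans (h.trans (mul_le_mul_of_nonneg_right (by linarith) hWn))
    have hTδ : T * δ = c₁ / 2 := by
      rw [hδdef]; field_simp
    have hTδi : T * δ⁻¹ = 2 * T ^ 2 / c₁ := by
      rw [hδdef]
      rw [inv_div]
      field_simp
    have hTW : T * W = (c₁ / 2) * X / 2 + (2 * T ^ 2 / c₁) * Y / 2 := by
      rw [hW]
      have : T * ((δ * X + δ⁻¹ * Y) / 2) = (T * δ) * X / 2 + (T * δ⁻¹) * Y / 2 := by ring
      rw [this, hTδ, hTδi]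
    have hεc : ε * (c₂ * Y) = (2 * T ^ 2 / c₁) * Y + Y := by
      rw [hεdef]
      field_simp
    have hεd : ε * (c₂ * Y) ≤ ε * (y ⬝ᵥ Q₂ *ᵥ y) := mul_le_mul_of_nonneg_left hA2 hε.le
    rw [hεc] at hεd
    rw [hTW] at hcr1 hcr2
    set a := x ⬝ᵥ Q₁ *ᵥ x with ha
    set u₁ := x ⬝ᵥ (P₁ * A₁₂) *ᵥ y with hu₁
    set u₂ := y ⬝ᵥ (A₁₂ᵀ * P₁) *ᵥ x with hu₂
    set d := y ⬝ᵥ Q₂ *ᵥ y with hd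
    clear hM hexp hsv hv hv' hS' hb₁ hb₂ h₁ h₂ hP₁sym hQ₁ hQ₂ hSdef hTdef hδdef hεdef hW hX hY hx hy ha hu₁ hu₂ hd hP₁ hP₂
    clear_value a u₁ u₂ d W X Y T S δ ε Q₁ Q₂ x y
    rcases hxy with hpos | hpos
    · nlinarith [mul_pos hc₁ hpos]
    · nlinarith [mul_pos hc₁ hpos]
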